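/- The ρ,h-cone-convex hull of a bounded set S, defined as the intersection of all compact ρ,h-cone-convex sets containing S, is itself ρ,h-cone-convex (provided at least one compact ρ,h-cone-convex set contains S). -/

import Mathlib

open MeasureTheory Metric Set Filter
open Topology

noncomputable section

/-- The open finite cone with vertex `x`, axis `ξ`, opening angle `ρ` and height `h`. -/
def fcone (d : ℕ) (ρ h : ℝ) (x ξ : EuclideanSpace ℝ (Fin d)) :
    Set (EuclideanSpace ℝ (Fin d)) :=
  {z | z ≠ x ∧ (inner ℝ ξ (‖z - x‖⁻¹ • (z - x)) : ℝ) > Real.cos (ρ / 2)} ∩ Metric.ball x h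

/-- `S` is `ρ,h`-cone-convex. -/
def ConeConvex (d : ℕ) (ρ h : ℝ) (S : Set (EuclideanSpace ℝ (Fin d))) : Prop :=
  ∀ x ∈ frontier S, ∃ ξ : EuclideanSpace ℝ (Fin d), ‖ξ‖ = 1 ∧ fcone d ρ h x ξ ⊆ Sᶜ

/-- The `ρ,h`-cone-convex hull by complement. -/
def cccHull (d : ℕ) (ρ h : ℝ) (S : Set (EuclideanSpace ℝ (Fin d))) :
    Set (EuclideanSpace ℝ (Fin d)) :=
  ⋂₀ {A | ∃ y ξ : EuclideanSpace ℝ (Fin d),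
      ‖ξ‖ = 1 ∧ fcone d ρ h y ξ ∩ S = ∅ ∧ A = (fcone d ρ h y ξ)ᶜ}

/-- The `ρ,h`-cone-convex hull: intersection of all compact `ρ,h`-cone-convex supersets. -/
def ccHull (d : ℕ) (ρ h : ℝ) (S : Set (EuclideanSpace ℝ (Fin d))) :
    Set (EuclideanSpace ℝ (Fin d)) :=
  ⋂₀ {B | S ⊆ B ∧ IsCompact B ∧ B.Nonempty ∧ ConeConvex d ρ h B}

/-- A preconnected set meeting both `t` and `tᶜ` meets `frontier t`. -/
lemma aux_inter_frontier {X : Type*} [TopologicalSpace X] {s t : Set X}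
    (hs : IsPreconnected s) (h1 : (s ∩ t).Nonempty) (h2 : (s \ t).Nonempty) :
    (s ∩ frontier t).Nonempty := by
  by_contra hne
  rw [Set.not_nonempty_iff_eq_empty] at hne
  have hfr : ∀ z ∈ s, z ∉ frontier t := fun z hz hf =>
    (Set.eq_empty_iff_forall_notMem.mp hne z ⟨hz, hf⟩)
  have hsub : s ⊆ interior t ∪ interior tᶜ := by
    intro z hz
    by_cases hzt : z ∈ t
    · left
      by_contra hint
      exact hfr z hz ⟨subset_closure hzt, hint⟩
    · right
      rw [interior_compl]
      by_contra hcl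
      simp only [Set.mem_compl_iff, not_not] at hcl
      exact hfr z hz ⟨hcl, fun hint => hzt (interior_subset hint)⟩
  have hst : (s ∩ interior t).Nonempty := by
    obtain ⟨a, has, hat⟩ := h1
    rcases hsub has with hin | hin
    · exact ⟨a, has, hin⟩
    · exact absurd (interior_subset hin) (by simpa using hat)
  have hst' : (s ∩ interior tᶜ).Nonempty := by
    obtain ⟨a, has, hat⟩ := h2
    rcases hsub has with hin | hin
    · exact absurd (interior_subset hin) hat
    · exact ⟨a, has, hin⟩
  obtain ⟨w, -, hw1, hw2⟩ := hs (interior t) (interior tᶜ) isOpen_interior isOpen_interior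
    hsub hst hst'
  exact (interior_subset hw2) (interior_subset hw1)

theorem stmt_4 {d : ℕ} {ρ h : ℝ} (hρ : ρ ∈ Set.Ioc 0 Real.pi) (hh : 0 < h)
    (S : Set (EuclideanSpace ℝ (Fin d))) (hSb : Bornology.IsBounded S)
    (hex : ∃ B : Set (EuclideanSpace ℝ (Fin d)),
      S ⊆ B ∧ IsCompact B ∧ B.Nonempty ∧ ConeConvex d ρ h B) :
    ConeConvex d ρ h (ccHull d ρ h S) := by
  intro x hx
  set H := ccHull d ρ h S with hHdef
  have hHclosed : IsClosed H := by
    apply isClosed_sInter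
    rintro B ⟨-, hBc, -, -⟩
    exact hBc.isClosed
  have hxH : x ∈ H := by
    have := hx.1
    rwa [hHclosed.closure_eq] at this
  have hxint : x ∉ interior H := fun hc => hx.2 hc
  -- step: approximate frontier points of members with cones
  have hstep : ∀ n : ℕ, ∃ y ξ : EuclideanSpace ℝ (Fin d), ‖ξ‖ = 1 ∧
      dist y x < 1 / (n + 1) ∧ fcone d ρ h y ξ ⊆ Hᶜ := by
    intro n
    have hball : ¬ ball x (1 / ((n : ℝ) + 1)) ⊆ H := by
      intro hsub
      exact hxint (mem_interior_iff_mem_nhds.mpr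
        (Filter.mem_of_superset (ball_mem_nhds x (by positivity)) hsub))
    obtain ⟨w, hwball, hwH⟩ := Set.not_subset.mp hball
    obtain ⟨B, hB, hwB⟩ : ∃ B ∈ {B | S ⊆ B ∧ IsCompact B ∧ B.Nonempty ∧ ConeConvex d ρ h B},
        w ∉ B := by
      by_contra hcon
      push_neg at hcon
      exact hwH (fun B hB => hcon B hB)
    obtain ⟨hSB, hBc, hBne, hBcc⟩ := hB
    have hHB : H ⊆ B := Set.sInter_subset_of_mem ⟨hSB, hBc, hBne, hBcc⟩
    have hxB : x ∈ B := hHB hxH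
    have hseg : segment ℝ x w ⊆ closedBall x (dist x w) :=
      (convex_closedBall x (dist x w)).segment_subset
        (mem_closedBall_self dist_nonneg) (by simp [dist_comm])
    obtain ⟨y, hyseg, hyfr⟩ := aux_inter_frontier ((convex_segment x w).isPreconnected)
      ⟨x, left_mem_segment ℝ x w, hxB⟩ ⟨w, right_mem_segment ℝ x w, hwB⟩
    obtain ⟨ξ, hξ, hcone⟩ := hBcc y hyfr
    refine ⟨y, ξ, hξ, ?_, fun z hz => fun hzH => hcone hz (hHB hzH)⟩
    have hy : dist y x ≤ dist x w := by
      have := hseg hyseg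
      simpa [dist_comm] using this
    calc dist y x ≤ dist x w := hy
      _ < 1 / (n + 1) := by rw [dist_comm]; exact mem_ball.mp hwball
  choose y ξ hξ hdy hcone using hstep
  -- y n → x
  have hytend : Tendsto y atTop (𝓝 x) := by
    rw [tendsto_iff_dist_tendsto_zero]
    exact squeeze_zero (fun n => dist_nonneg) (fun n => (hdy n).le)
      tendsto_one_div_add_atTop_nhds_zero_nat
  -- ξ has a convergent subsequence
  have hξmem : ∀ n, ξ n ∈ sphere (0 : EuclideanSpace ℝ (Fin d)) 1 := by
    intro n; simpa [mem_sphere_iff_norm] using hξ n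
  obtain ⟨ζ, hζmem, φ, hφ, hξtend⟩ :=
    (isCompact_sphere (0 : EuclideanSpace ℝ (Fin d)) 1).tendsto_subseq hξmem
  refine ⟨ζ, by simpa [mem_sphere_iff_norm] using hζmem, ?_⟩
  intro z hz
  obtain ⟨⟨hz1, hz2⟩, hz3⟩ := hz
  have hyφ : Tendsto (fun n => y (φ n)) atTop (𝓝 x) := hytend.comp hφ.tendsto_atTop
  have tv : Tendsto (fun n => z - y (φ n)) atTop (𝓝 (z - x)) :=
    tendsto_const_nhds.sub hyφ
  have tn : Tendsto (fun n => ‖z - y (φ n)‖) atTop (𝓝 ‖z - x‖) := tv.norm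
  have hzx : ‖z - x‖ ≠ 0 := norm_ne_zero_iff.mpr (sub_ne_zero.mpr hz1)
  have tinv : Tendsto (fun n => ‖z - y (φ n)‖⁻¹) atTop (𝓝 ‖z - x‖⁻¹) := tn.inv₀ hzx
  have tsmul : Tendsto (fun n => ‖z - y (φ n)‖⁻¹ • (z - y (φ n))) atTop
      (𝓝 (‖z - x‖⁻¹ • (z - x))) := tinv.smul tv
  have tF : Tendsto (fun n => (inner ℝ (ξ (φ n)) (‖z - y (φ n)‖⁻¹ • (z - y (φ n))) : ℝ)) atTop
      (𝓝 (inner ℝ ζ (‖z - x‖⁻¹ • (z - x)) : ℝ)) := hξtend.inner tsmul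
  have e1 : ∀ᶠ n in atTop, Real.cos (ρ / 2) <
      (inner ℝ (ξ (φ n)) (‖z - y (φ n)‖⁻¹ • (z - y (φ n))) : ℝ) := tF.eventually_const_lt hz2
  have hzxh : ‖z - x‖ < h := by rw [← dist_eq_norm]; exact mem_ball.mp hz3
  have e2 : ∀ᶠ n in atTop, ‖z - y (φ n)‖ < h := tn.eventually_lt_const hzxh
  have e3 : ∀ᶠ n in atTop, (0 : ℝ) < ‖z - y (φ n)‖ :=
    tn.eventually_const_lt (lt_of_le_of_ne (norm_nonneg _) (Ne.symm hzx))
  obtain ⟨n, h1, h2, h3⟩ := (e1.and (e2.and e3)).exists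
  have hzne : z ≠ y (φ n) := by
    intro hzy
    rw [hzy] at h3
    simp at h3
  have : z ∈ fcone d ρ h (y (φ n)) (ξ (φ n)) := by
    refine ⟨⟨hzne, h1⟩, ?_⟩
    rw [mem_ball, dist_eq_norm]
    exact h2
  exact hcone (φ n) this
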